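/- Let β ≥ 1, let m ≥ 2 be an integer, let μ be a Borel probability measure on the cube [0,1]^m (a utility vector u = (u_1, …, u_m)), and let W, B ∈ {1, …, m}. Suppose ∫ exp(β·u_W) / (∑_{k=1}^m exp(β·u_k)) dμ ≥ ∫ exp(β·u_B) / (∑_{k=1}^m exp(β·u_k)) dμ. Then ∫ u_B dμ ≤ min( m·exp(β)/(ln(m−1) + 2) + 1, exp(2β)/β ) · ∫ u_W dμ. -/

import Mathlib

open MeasureTheory Real

/-- Key analytic lemma: for `c ≥ 1` and `x ≥ 0`, `(log c + 2)(e^x - 1) ≤ x (e^x + c)`. -/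
lemma key_ineq (c : ℝ) (hc : 1 ≤ c) (x : ℝ) (hx : 0 ≤ x) :
    (Real.log c + 2) * (Real.exp x - 1) ≤ x * (Real.exp x + c) := by
  have hcpos : (0:ℝ) < c := by linarith
  set L := Real.log c + 2 with hL
  set F : ℝ → ℝ := fun t => t * (Real.exp t + c) - L * (Real.exp t - 1) with hFdef
  have hd : ∀ t : ℝ, HasDerivAt F (Real.exp t + c + t * Real.exp t - L * Real.exp t) t := by
    intro t
    have h1 : HasDerivAt (fun t : ℝ => t * (Real.exp t + c))
        (1 * (Real.exp t + c) + t * Real.exp t) t :=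
      (hasDerivAt_id t).mul ((Real.hasDerivAt_exp t).add_const c)
    have h2 : HasDerivAt (fun t : ℝ => L * (Real.exp t - 1)) (L * Real.exp t) t :=
      ((Real.hasDerivAt_exp t).sub_const 1).const_mul L
    have := h1.sub h2
    have heq : 1 * (Real.exp t + c) + t * Real.exp t - L * Real.exp t
        = Real.exp t + c + t * Real.exp t - L * Real.exp t := by ring
    rw [heq] at this
    exact this
  have hmono : MonotoneOn F (Set.Ici (0:ℝ)) := by
    apply monotoneOn_of_deriv_nonneg (convex_Ici 0)
    · fun_prop
    · intro t ht
      exact (hd t).differentiableAt.differentiableWithinAt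
    · intro t ht
      rw [(hd t).deriv]
      have h3 : (0:ℝ) < Real.exp t := Real.exp_pos t
      have h4 : Real.log c - t + 1 ≤ Real.exp (Real.log c - t) := Real.add_one_le_exp _
      have h5 : Real.exp (Real.log c - t) * Real.exp t = c := by
        rw [← Real.exp_add]
        simp [Real.exp_log hcpos]
      nlinarith [mul_le_mul_of_nonneg_right h4 h3.le]
  have hfx : F 0 ≤ F x := hmono Set.self_mem_Ici (Set.mem_Ici.mpr hx) hx
  have h0 : F 0 = 0 := by simp [hFdef]
  rw [h0] at hfx
  simp only [hFdef] at hfx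
  linarith

/-- Chord bound for exp on `[0,1]`. -/
lemma exp_le_linear (β x : ℝ) (h0 : 0 ≤ x) (h1 : x ≤ 1) :
    Real.exp (β * x) ≤ 1 + (Real.exp β - 1) * x := by
  have h := convexOn_exp.2 (Set.mem_univ (0:ℝ)) (Set.mem_univ β)
      (by linarith : (0:ℝ) ≤ 1 - x) h0 (by ring)
  simp only [smul_eq_mul, mul_zero, zero_add, Real.exp_zero, mul_one] at h
  have : x * β = β * x := mul_comm _ _
  rw [this] at h
  linarith

/-- Main pointwise inequality. -/
lemma ptwise_main (M eβ a b Sv : ℝ) (hM : 2 ≤ M) (ha1 : 1 ≤ a) (hb1 : 1 ≤ b)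
    (heβ : 1 ≤ eβ)
    (hSub : Sv ≤ M * eβ) (hSlb : a + (M - 1) ≤ Sv) :
    max (b - a) 0 / (M * eβ) ≤ (b / Sv - a / Sv) + (a - 1) / (a + (M - 1)) := by
  have hSpos : 0 < Sv := by linarith
  have hd2 : 0 < a + (M - 1) := by linarith
  have hMe : 0 < M * eβ := by nlinarith
  rcases le_total a b with hab | hab
  · rw [max_eq_left (by linarith)]
    have h1 : (b - a) / (M * eβ) ≤ (b - a) / Sv := by
      gcongr
    have h2 : 0 ≤ (a - 1) / (a + (M - 1)) := div_nonneg (by linarith) hd2.le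
    have h3 : (b - a) / Sv = b / Sv - a / Sv := sub_div _ _ _
    linarith
  · rw [max_eq_right (by linarith)]
    have h1 : (a - b) / Sv ≤ (a - 1) / Sv := by gcongr <;> linarith
    have h2 : (a - 1) / Sv ≤ (a - 1) / (a + (M - 1)) := by
      gcongr
    have h3 : b / Sv - a / Sv = -((a - b) / Sv) := by ring
    rw [zero_div]
    linarith

lemma arith1 (e w : ℝ) (he : 1 ≤ e) (hw : 0 ≤ w) :
    e * (e - 1) * w + (e - 1) * w ≤ e * e * w := by nlinarith

lemma arith2 (a e x : ℝ) (ha : 1 ≤ a) (hx : 0 ≤ x) (he : x + 1 ≤ e) :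
    x ≤ a * e - a := by nlinarith
theorem plurality_upper_bound (β : ℝ) (hβ : 1 ≤ β) (m : ℕ) (hm : 2 ≤ m)
    (μ : Measure (Fin m → ℝ)) [IsProbabilityMeasure μ]
    (hsupp : ∀ᵐ u ∂μ, ∀ j, u j ∈ Set.Icc (0:ℝ) 1)
    (W B : Fin m)
    (h : (∫ u, Real.exp (β * u W) / (∑ k, Real.exp (β * u k)) ∂μ)
       ≥ (∫ u, Real.exp (β * u B) / (∑ k, Real.exp (β * u k)) ∂μ)) :
    (∫ u, u B ∂μ) ≤
      min ((m : ℝ) * Real.exp β / (Real.log ((m : ℝ) - 1) + 2) + 1)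
          (Real.exp (2 * β) / β) * (∫ u, u W ∂μ) := by
  have hβ0 : (0:ℝ) < β := by linarith
  have hm2 : (2:ℝ) ≤ (m:ℝ) := by exact_mod_cast hm
  have hm1 : (1:ℝ) ≤ (m:ℝ) - 1 := by linarith
  have hmpos : (0:ℝ) < (m:ℝ) := by linarith
  have heβ1 : (1:ℝ) ≤ Real.exp β := Real.one_le_exp (by linarith)
  have heβ0 : (0:ℝ) < Real.exp β := Real.exp_pos β
  have hMe : (0:ℝ) < (m:ℝ) * Real.exp β := by positivity
  set L : ℝ := Real.log ((m:ℝ) - 1) + 2 with hLdef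
  have hL : (0:ℝ) < L := by
    have := Real.log_nonneg hm1
    simp only [hLdef]; linarith
  -- notation
  set S : (Fin m → ℝ) → ℝ := fun u => ∑ k, Real.exp (β * u k) with hSdef
  set fp : (Fin m → ℝ) → ℝ := fun u => max (Real.exp (β * u B) - Real.exp (β * u W)) 0
    with hfpdef
  set ψ : (Fin m → ℝ) → ℝ :=
    fun u => (Real.exp (β * u W) - 1) / (Real.exp (β * u W) + ((m:ℝ) - 1)) with hψdef
  have hne : Nonempty (Fin m) := ⟨⟨0, by omega⟩⟩
  have hSpos : ∀ u, 0 < S u := fun u =>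
    Finset.sum_pos (fun k _ => Real.exp_pos _) Finset.univ_nonempty
  have hterm_le : ∀ (u : Fin m → ℝ) (j : Fin m), Real.exp (β * u j) ≤ S u := by
    intro u j
    exact Finset.single_le_sum (f := fun k => Real.exp (β * u k))
      (fun k _ => (Real.exp_pos _).le) (Finset.mem_univ j)
  have hScont : Continuous S := by
    apply continuous_finset_sum
    intro k _
    exact Real.continuous_exp.comp (continuous_const.mul (continuous_apply k))
  have hψdenom : ∀ u : Fin m → ℝ, 0 < Real.exp (β * u W) + ((m:ℝ) - 1) := by
    intro u
    have := Real.exp_pos (β * u W)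
    linarith
  -- integrability helper
  have hint : ∀ (f : (Fin m → ℝ) → ℝ) (C : ℝ), Continuous f →
      (∀ᵐ u ∂μ, ‖f u‖ ≤ C) → Integrable f μ := by
    intro f C hf hb
    exact (integrable_const C).mono' hf.aestronglyMeasurable hb
  -- basic bounds a.e.
  have hWcont : Continuous fun u : Fin m → ℝ => u W := continuous_apply W
  have hBcont : Continuous fun u : Fin m → ℝ => u B := continuous_apply B
  have haWcont : Continuous fun u : Fin m → ℝ => Real.exp (β * u W) :=
    Real.continuous_exp.comp (continuous_const.mul hWcont)
  have haBcont : Continuous fun u : Fin m → ℝ => Real.exp (β * u B) :=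
    Real.continuous_exp.comp (continuous_const.mul hBcont)
  -- pointwise exp bounds under support assumption
  have hub : ∀ (u : Fin m → ℝ), (∀ j, u j ∈ Set.Icc (0:ℝ) 1) → ∀ j,
     1 ≤ Real.exp (β * u j) ∧ Real.exp (β * u j) ≤ Real.exp β := by
    intro u hu j
    constructor
    · exact Real.one_le_exp (mul_nonneg hβ0.le (hu j).1)
    · exact Real.exp_le_exp.mpr (mul_le_of_le_one_right hβ0.le (hu j).2)
  have hSub : ∀ (u : Fin m → ℝ), (∀ j, u j ∈ Set.Icc (0:ℝ) 1) →
      S u ≤ (m:ℝ) * Real.exp β := by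
    intro u hu
    calc S u ≤ ∑ _k : Fin m, Real.exp β :=
          Finset.sum_le_sum (fun k _ => (hub u hu k).2)
      _ = (m:ℝ) * Real.exp β := by
          simp [Finset.sum_const, Finset.card_univ, nsmul_eq_mul]
  have hSlb : ∀ (u : Fin m → ℝ), (∀ j, u j ∈ Set.Icc (0:ℝ) 1) →
      Real.exp (β * u W) + ((m:ℝ) - 1) ≤ S u := by
    intro u hu
    have hsplit : ∑ k ∈ Finset.univ.erase W, Real.exp (β * u k) + Real.exp (β * u W)
        = S u := Finset.sum_erase_add Finset.univ _ (Finset.mem_univ W)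
    have hcard : (Finset.univ.erase W).card = m - 1 := by
      rw [Finset.card_erase_of_mem (Finset.mem_univ W), Finset.card_univ, Fintype.card_fin]
    have hlow : ((m:ℝ) - 1) ≤ ∑ k ∈ Finset.univ.erase W, Real.exp (β * u k) := by
      have h1 : ∀ k ∈ Finset.univ.erase W, (1:ℝ) ≤ Real.exp (β * u k) :=
        fun k _ => (hub u hu k).1
      have h2 := Finset.card_nsmul_le_sum (Finset.univ.erase W)
        (fun k => Real.exp (β * u k)) 1 h1
      rw [hcard] at h2
      have : ((m - 1 : ℕ) : ℝ) = (m:ℝ) - 1 := by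
        push_cast [Nat.cast_sub (by omega : 1 ≤ m)]
        ring
      rw [nsmul_eq_mul, mul_one] at h2
      linarith [h2, this.symm.le.trans h2]
    linarith
  -- Integrability of everything
  have iW : Integrable (fun u => u W) μ := by
    apply hint _ 1 hWcont
    filter_upwards [hsupp] with u hu
    rw [Real.norm_eq_abs, abs_le]
    exact ⟨by linarith [(hu W).1], (hu W).2⟩
  have iB : Integrable (fun u => u B) μ := by
    apply hint _ 1 hBcont
    filter_upwards [hsupp] with u hu
    rw [Real.norm_eq_abs, abs_le]
    exact ⟨by linarith [(hu B).1], (hu B).2⟩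
  have iWS : Integrable (fun u => Real.exp (β * u W) / S u) μ := by
    refine hint (fun u => Real.exp (β * u W) / S u) 1 ?_ ?_
    · exact haWcont.div hScont fun u => (hSpos u).ne'
    apply Filter.Eventually.of_forall
    intro u
    rw [Real.norm_eq_abs, abs_le]
    constructor
    · have := div_nonneg (Real.exp_pos (β * u W)).le (hSpos u).le
      linarith
    · rw [div_le_one (hSpos u)]
      exact hterm_le u W
  have iBS : Integrable (fun u => Real.exp (β * u B) / S u) μ := by
    refine hint (fun u => Real.exp (β * u B) / S u) 1 ?_ ?_
    · exact haBcont.div hScont fun u => (hSpos u).ne'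
    apply Filter.Eventually.of_forall
    intro u
    rw [Real.norm_eq_abs, abs_le]
    constructor
    · have := div_nonneg (Real.exp_pos (β * u B)).le (hSpos u).le
      linarith
    · rw [div_le_one (hSpos u)]
      exact hterm_le u B
  have ifp : Integrable fp μ := by
    apply hint _ (Real.exp β) (by fun_prop)
    filter_upwards [hsupp] with u hu
    rw [Real.norm_eq_abs, abs_le]
    have h1 := (hub u hu B).2
    have h2 := (hub u hu W).1
    constructor
    · have : (0:ℝ) ≤ fp u := le_max_right _ _
      linarith
    · simp only [hfpdef]
      rw [max_le_iff]
      exact ⟨by linarith, by linarith⟩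
  have iψ : Integrable ψ μ := by
    apply hint _ (Real.exp β) ?_
    · filter_upwards [hsupp] with u hu
      rw [Real.norm_eq_abs, abs_le]
      have h1 := (hub u hu W).1
      have h2 := (hub u hu W).2
      have hd := hψdenom u
      constructor
      · have : (0:ℝ) ≤ ψ u := div_nonneg (by linarith) hd.le
        linarith
      · simp only [hψdef]
        rw [div_le_iff₀ hd]
        have h3 : Real.exp β * 1 ≤ Real.exp β * (Real.exp (β * u W) + ((m:ℝ) - 1)) :=
          mul_le_mul_of_nonneg_left (by linarith) heβ0.le
        linarith
    · exact (haWcont.sub continuous_const).div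
        (haWcont.add continuous_const) fun u => (hψdenom u).ne'
  have iaW1 : Integrable (fun u => Real.exp (β * u W) - 1) μ := by
    apply hint _ (Real.exp β) (haWcont.sub continuous_const)
    filter_upwards [hsupp] with u hu
    rw [Real.norm_eq_abs, abs_le]
    have h1 := (hub u hu W).1
    have h2 := (hub u hu W).2
    exact ⟨by simp only [Pi.sub_apply]; linarith, by simp only [Pi.sub_apply]; linarith⟩
  -- Key integral inequality: ∫ fp ≤ m e^β ∫ ψ
  have hP1 : ∀ᵐ u ∂μ, fp u / ((m:ℝ) * Real.exp β)
      ≤ (Real.exp (β * u B) / S u - Real.exp (β * u W) / S u) + ψ u := by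
    filter_upwards [hsupp] with u hu
    have := ptwise_main (m:ℝ) (Real.exp β) (Real.exp (β * u W)) (Real.exp (β * u B))
      (S u) hm2 (hub u hu W).1 (hub u hu B).1 heβ1 (hSub u hu) (hSlb u hu)
    simpa only [hfpdef, hψdef] using this
  have hK : ∫ u, fp u ∂μ ≤ ((m:ℝ) * Real.exp β) * ∫ u, ψ u ∂μ := by
    have imid : Integrable (fun u =>
        (Real.exp (β * u B) / S u - Real.exp (β * u W) / S u) + ψ u) μ := by
      exact (iBS.sub iWS).add iψ
    have step := integral_mono_ae (ifp.div_const ((m:ℝ) * Real.exp β)) imid hP1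
    rw [integral_div] at step
    have isub : Integrable (fun u =>
        Real.exp (β * u B) / S u - Real.exp (β * u W) / S u) μ := by
      exact iBS.sub iWS
    rw [integral_add isub iψ, integral_sub iBS iWS] at step
    rw [div_le_iff₀ hMe] at step
    have hh : ∫ u, Real.exp (β * u B) / S u ∂μ - ∫ u, Real.exp (β * u W) / S u ∂μ ≤ 0 := by
      simp only [hSdef]
      linarith [h]
    have hstep2 : (∫ u, Real.exp (β * u B) / S u ∂μ - ∫ u, Real.exp (β * u W) / S u ∂μ
          + ∫ u, ψ u ∂μ) * ((m:ℝ) * Real.exp β)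
        ≤ (∫ u, ψ u ∂μ) * ((m:ℝ) * Real.exp β) := by
      apply mul_le_mul_of_nonneg_right _ hMe.le
      linarith
    have hfin := le_trans step hstep2
    linarith [mul_comm (∫ u, ψ u ∂μ) ((m:ℝ) * Real.exp β), hfin]
  -- set the main integrals
  set IW : ℝ := ∫ u, u W ∂μ with hIWdef
  set IB : ℝ := ∫ u, u B ∂μ with hIBdef
  have hIW0 : 0 ≤ IW := by
    apply integral_nonneg_of_ae
    filter_upwards [hsupp] with u hu
    exact (hu W).1
  -- ψ bounds
  have hψ1 : ∫ u, ψ u ∂μ ≤ (Real.exp β - 1) / (m:ℝ) * IW := by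
    have hpt : ∀ᵐ u ∂μ, ψ u ≤ (Real.exp β - 1) / (m:ℝ) * u W := by
      filter_upwards [hsupp] with u hu
      have h1 := (hub u hu W).1
      have hd := hψdenom u
      have l1 : ψ u ≤ (Real.exp (β * u W) - 1) / (m:ℝ) := by
        simp only [hψdef]
        gcongr
        · linarith
      have l2 : Real.exp (β * u W) - 1 ≤ (Real.exp β - 1) * u W := by
        have := exp_le_linear β (u W) (hu W).1 (hu W).2
        linarith
      have l3 : (Real.exp (β * u W) - 1) / (m:ℝ) ≤ ((Real.exp β - 1) * u W) / (m:ℝ) := by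
        gcongr
      have l4 : ((Real.exp β - 1) * u W) / (m:ℝ) = (Real.exp β - 1) / (m:ℝ) * u W := by
        ring
      linarith
    have := integral_mono_ae iψ (iW.const_mul _) hpt
    rwa [integral_const_mul] at this
  have hψ2 : ∫ u, ψ u ∂μ ≤ β / L * IW := by
    have hpt : ∀ᵐ u ∂μ, ψ u ≤ β / L * u W := by
      filter_upwards [hsupp] with u hu
      have hkey := key_ineq ((m:ℝ) - 1) hm1 (β * u W) (mul_nonneg hβ0.le (hu W).1)
      have hd := hψdenom u
      have : ψ u ≤ (β * u W) / L := by
        simp only [hψdef]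
        rw [div_le_div_iff₀ hd hL]
        calc (Real.exp (β * u W) - 1) * L = L * (Real.exp (β * u W) - 1) := by ring
          _ ≤ (β * u W) * (Real.exp (β * u W) + ((m:ℝ) - 1)) := hkey
      calc ψ u ≤ (β * u W) / L := this
        _ = β / L * u W := by ring
    have := integral_mono_ae iψ (iW.const_mul _) hpt
    rwa [integral_const_mul] at this
  -- Bound 2 (the log bound): IB ≤ (m e^β / L + 1) * IW
  have hbound2 : IB ≤ ((m:ℝ) * Real.exp β / L + 1) * IW := by
    have hpt : ∀ᵐ u ∂μ, β * (u B - u W) ≤ fp u := by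
      filter_upwards [hsupp] with u hu
      rcases le_total (u B) (u W) with hc | hc
      · have : β * (u B - u W) ≤ 0 := mul_nonpos_of_nonneg_of_nonpos hβ0.le (by linarith)
        exact this.trans (le_max_right _ _)
      · have ha1 := (hub u hu W).1
        have heq : Real.exp (β * u B)
            = Real.exp (β * u W) * Real.exp (β * (u B - u W)) := by
          rw [← Real.exp_add]; ring_nf
        have h4 := Real.add_one_le_exp (β * (u B - u W))
        have h5 : 0 ≤ β * (u B - u W) := mul_nonneg hβ0.le (by linarith)
        have : β * (u B - u W) ≤ Real.exp (β * u B) - Real.exp (β * u W) := by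
          rw [heq]
          exact arith2 _ _ _ ha1 h5 h4
        exact this.trans (le_max_left _ _)
    have ii : Integrable (fun u : Fin m → ℝ => β * (u B - u W)) μ := by
      exact (iB.sub iW).const_mul β
    have hmono := integral_mono_ae ii ifp hpt
    rw [integral_const_mul, integral_sub iB iW] at hmono
    -- β (IB - IW) ≤ ∫ fp ≤ m e^β (β/L) IW
    have hchain : β * (IB - IW) ≤ (m:ℝ) * Real.exp β * (β / L * IW) := by
      calc β * (IB - IW) ≤ ∫ u, fp u ∂μ := hmono
        _ ≤ ((m:ℝ) * Real.exp β) * ∫ u, ψ u ∂μ := hK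
        _ ≤ (m:ℝ) * Real.exp β * (β / L * IW) :=
            mul_le_mul_of_nonneg_left hψ2 hMe.le
    have : IB - IW ≤ (m:ℝ) * Real.exp β / L * IW := by
      have h6 : (m:ℝ) * Real.exp β * (β / L * IW) = β * ((m:ℝ) * Real.exp β / L * IW) := by
        ring
      rw [h6] at hchain
      exact le_of_mul_le_mul_left hchain hβ0
    linarith
  -- Bound 1 (the e^{2β}/β bound): IB ≤ exp(2β)/β * IW
  have hbound1 : IB ≤ Real.exp (2 * β) / β * IW := by
    have hpt : ∀ᵐ u ∂μ, β * u B ≤ fp u + (Real.exp (β * u W) - 1) := by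
      filter_upwards [hsupp] with u hu
      have h4 := Real.add_one_le_exp (β * u B)
      have h5 : Real.exp (β * u B) - Real.exp (β * u W) ≤ fp u := le_max_left _ _
      linarith
    have iadd : Integrable (fun u => fp u + (Real.exp (β * u W) - 1)) μ := by
      exact ifp.add iaW1
    have hmono := integral_mono_ae (iB.const_mul β) iadd hpt
    rw [integral_const_mul, integral_add ifp iaW1] at hmono
    have haW1 : ∫ u, (Real.exp (β * u W) - 1) ∂μ ≤ (Real.exp β - 1) * IW := by
      have hpt2 : ∀ᵐ u ∂μ, Real.exp (β * u W) - 1 ≤ (Real.exp β - 1) * u W := by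
        filter_upwards [hsupp] with u hu
        have := exp_le_linear β (u W) (hu W).1 (hu W).2
        linarith
      have := integral_mono_ae iaW1 (iW.const_mul _) hpt2
      rwa [integral_const_mul] at this
    have hc1 : ((m:ℝ) * Real.exp β) * ((Real.exp β - 1) / (m:ℝ) * IW)
        = Real.exp β * (Real.exp β - 1) * IW := by
      field_simp
    have hchain : β * IB ≤ Real.exp β * (Real.exp β - 1) * IW + (Real.exp β - 1) * IW := by
      calc β * IB ≤ (∫ u, fp u ∂μ) + ∫ u, (Real.exp (β * u W) - 1) ∂μ := hmono
        _ ≤ ((m:ℝ) * Real.exp β) * (∫ u, ψ u ∂μ) + (Real.exp β - 1) * IW := by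
            linarith
        _ ≤ ((m:ℝ) * Real.exp β) * ((Real.exp β - 1) / (m:ℝ) * IW) + (Real.exp β - 1) * IW := by
            have := mul_le_mul_of_nonneg_left hψ1 hMe.le
            linarith
        _ = Real.exp β * (Real.exp β - 1) * IW + (Real.exp β - 1) * IW := by rw [hc1]
    have he2 : Real.exp (2 * β) = Real.exp β * Real.exp β := by
      rw [two_mul, Real.exp_add]
    have hfin : β * IB ≤ Real.exp (2 * β) * IW := by
      rw [he2]
      have := arith1 (Real.exp β) IW heβ1 hIW0
      linarith
    have hgoal : IB ≤ (Real.exp (2 * β) * IW) / β := by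
      rw [le_div_iff₀ hβ0]
      linarith [mul_comm IB β]
    have heqq : (Real.exp (2 * β) * IW) / β = Real.exp (2 * β) / β * IW := by ring
    linarith [hgoal, heqq.le, heqq.ge]
  -- conclude
  rcases le_total ((m:ℝ) * Real.exp β / L + 1) (Real.exp (2 * β) / β) with hc | hc
  · rw [min_eq_left hc]
    exact hbound2
  · rw [min_eq_right hc]
    exact hbound1
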